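/- For an invertible endomorphism g of a finite-dimensional real vector space, each multiplicative Jordan component e, h, u of g = ehu is a real polynomial in g. -/

import Mathlib

open TensorProduct

/-- An endomorphism of a vector space over `K` is diagonalizable if its eigenspaces span. -/
def IsDiag {K M : Type*} [Field K] [AddCommGroup M] [Module K M]
    (f : Module.End K M) : Prop :=
  (⨆ μ : K, f.eigenspace μ) = ⊤

/-- The complexification of a real endomorphism, acting on `ℂ ⊗[ℝ] V`. -/
noncomputable def cplx {V : Type*} [AddCommGroup V] [Module ℝ V]
    (X : Module.End ℝ V) : Module.End ℂ (ℂ ⊗[ℝ] V) :=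
  LinearMap.baseChange ℂ X

/-- `X` is (additively) elliptic: semisimple with purely imaginary eigenvalues. -/
noncomputable def IsElliptic {V : Type*} [AddCommGroup V] [Module ℝ V]
    (X : Module.End ℝ V) : Prop :=
  IsDiag (cplx X) ∧ ∀ μ : ℂ, (cplx X).HasEigenvalue μ → μ.re = 0

/-- `X` is (additively) hyperbolic: semisimple with real eigenvalues. -/
noncomputable def IsHyperbolic {V : Type*} [AddCommGroup V] [Module ℝ V]
    (X : Module.End ℝ V) : Prop :=
  IsDiag (cplx X) ∧ ∀ μ : ℂ, (cplx X).HasEigenvalue μ → μ.im = 0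

/-- `g` is (multiplicatively) elliptic: semisimple with eigenvalues of absolute value one. -/
noncomputable def IsMultElliptic {V : Type*} [AddCommGroup V] [Module ℝ V]
    (g : Module.End ℝ V) : Prop :=
  IsDiag (cplx g) ∧ ∀ μ : ℂ, (cplx g).HasEigenvalue μ → ‖μ‖ = 1

/-- `g` is (multiplicatively) hyperbolic: semisimple with positive real eigenvalues. -/
noncomputable def IsMultHyperbolic {V : Type*} [AddCommGroup V] [Module ℝ V]
    (g : Module.End ℝ V) : Prop :=
  IsDiag (cplx g) ∧ ∀ μ : ℂ, (cplx g).HasEigenvalue μ → μ.im = 0 ∧ 0 < μ.re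

/-! ### Auxiliary lemmas -/

open Polynomial Module

section Cplx

variable {V : Type*} [AddCommGroup V] [Module ℝ V]

lemma cplx_mul (X Y : Module.End ℝ V) : cplx (X * Y) = cplx X * cplx Y :=
  LinearMap.baseChange_mul X Y

lemma cplx_aeval (X : Module.End ℝ V) (p : ℝ[X]) :
    aeval (cplx X) (p.map (algebraMap ℝ ℂ)) = cplx (aeval X p) := by
  rw [aeval_map_algebraMap, show cplx X = Module.End.baseChangeHom ℝ ℂ V X from rfl,
    aeval_algHom_apply]; rfl

/-- real-part retraction of the complexification -/
noncomputable def retrRe : (ℂ ⊗[ℝ] V) →ₗ[ℝ] V :=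
  (TensorProduct.lid ℝ V).toLinearMap ∘ₗ LinearMap.rTensor V Complex.reLm

/-- imaginary-part retraction of the complexification -/
noncomputable def retrIm : (ℂ ⊗[ℝ] V) →ₗ[ℝ] V :=
  (TensorProduct.lid ℝ V).toLinearMap ∘ₗ LinearMap.rTensor V Complex.imLm

@[simp] lemma retrRe_tmul (z : ℂ) (v : V) : retrRe (z ⊗ₜ[ℝ] v) = z.re • v := by
  simp [retrRe]

@[simp] lemma retrIm_tmul (z : ℂ) (v : V) : retrIm (z ⊗ₜ[ℝ] v) = z.im • v := by
  simp [retrIm]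

lemma cplx_injective : Function.Injective (cplx (V := V)) := by
  intro X Y hXY
  ext v
  have := congrArg (fun (F : Module.End ℂ (ℂ ⊗[ℝ] V)) => retrRe (F ((1:ℂ) ⊗ₜ[ℝ] v))) hXY
  simpa [cplx, LinearMap.baseChange_tmul] using this

lemma exists_re_im (P : ℂ[X]) :
    ∃ A B : ℝ[X], P = A.map (algebraMap ℝ ℂ) + C Complex.I * B.map (algebraMap ℝ ℂ) := by
  induction P using Polynomial.induction_on' with
  | add p q hp hq =>
    obtain ⟨A, B, rfl⟩ := hp; obtain ⟨A', B', rfl⟩ := hq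
    exact ⟨A + A', B + B', by push_cast [Polynomial.map_add]; ring⟩
  | monomial n c =>
    refine ⟨monomial n c.re, monomial n c.im, ?_⟩
    simp only [Polynomial.map_monomial]
    rw [C_mul_monomial, ← (monomial n).map_add]
    congr 1
    simp [Complex.ext_iff]

lemma minpoly_cplx [FiniteDimensional ℝ V] (X : Module.End ℝ V) :
    minpoly ℂ (cplx X) = (minpoly ℝ X).map (algebraMap ℝ ℂ) := by
  have hiR : IsIntegral ℝ X := Algebra.IsIntegral.isIntegral X
  have hiC : IsIntegral ℂ (cplx X) := Algebra.IsIntegral.isIntegral _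
  have d1 : minpoly ℂ (cplx X) ∣ (minpoly ℝ X).map (algebraMap ℝ ℂ) := by
    apply minpoly.dvd
    rw [cplx_aeval, minpoly.aeval]
    simp [cplx]
  have d2 : (minpoly ℝ X).map (algebraMap ℝ ℂ) ∣ minpoly ℂ (cplx X) := by
    obtain ⟨A, B, hAB⟩ := exists_re_im (minpoly ℂ (cplx X))
    have h0 : aeval (cplx X) (minpoly ℂ (cplx X)) = 0 := minpoly.aeval ℂ (cplx X)
    rw [hAB, map_add, map_mul, cplx_aeval, cplx_aeval, aeval_C] at h0
    have hv : ∀ v : V, (1:ℂ) ⊗ₜ[ℝ] ((aeval X A) v) + Complex.I ⊗ₜ[ℝ] ((aeval X B) v) = 0 := by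
      intro v
      have := congrArg (fun (F : Module.End ℂ (ℂ ⊗[ℝ] V)) => F ((1:ℂ) ⊗ₜ[ℝ] v)) h0
      simp only [LinearMap.add_apply, Module.End.mul_apply, LinearMap.zero_apply] at this
      rw [show ∀ w, cplx (aeval X B) ((1:ℂ) ⊗ₜ[ℝ] w) = (1:ℂ) ⊗ₜ[ℝ] (aeval X B w) from
        fun w => rfl] at this
      rw [show cplx (aeval X A) ((1:ℂ) ⊗ₜ[ℝ] v) = (1:ℂ) ⊗ₜ[ℝ] (aeval X A v) from rfl] at this
      rwa [Module.algebraMap_end_apply, TensorProduct.smul_tmul', smul_eq_mul, mul_one] at this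
    have hA : aeval X A = 0 := by
      ext v
      have := congrArg retrRe (hv v)
      simpa using this
    have hB : aeval X B = 0 := by
      ext v
      have := congrArg retrIm (hv v)
      simpa using this
    rw [hAB]
    exact dvd_add (Polynomial.map_dvd _ (minpoly.dvd ℝ X hA))
      (Dvd.dvd.mul_left (Polynomial.map_dvd _ (minpoly.dvd ℝ X hB)) _)
  exact Polynomial.eq_of_monic_of_associated (minpoly.monic hiC)
    ((minpoly.monic hiR).map _) (associated_of_dvd_dvd d1 d2)

lemma eval_map_conj (p : ℝ[X]) (z : ℂ) :
    (p.map (algebraMap ℝ ℂ)).eval ((starRingEnd ℂ) z) =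
      (starRingEnd ℂ) ((p.map (algebraMap ℝ ℂ)).eval z) := by
  rw [Polynomial.eval_map, Polynomial.eval_map, Polynomial.hom_eval₂]
  congr 1
  ext x
  simp

end Cplx

section Diag

variable {K M : Type*} [Field K] [AddCommGroup M] [Module K M] [FiniteDimensional K M]

lemma IsDiag.isSemisimple {f : Module.End K M} (hf : IsDiag f) : f.IsSemisimple := by
  classical
  have hint : IsIntegral K f := Algebra.IsIntegral.isIntegral f
  set Λ : Finset K := (minpoly K f).roots.toFinset with hΛ
  set P : K[X] := ∏ μ ∈ Λ, (X - C μ) with hP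
  have hsep : P.Separable := by
    rw [hP]
    exact Polynomial.separable_prod_X_sub_C_iff'.mpr (fun a _ b _ hab => hab)
  refine Module.End.isSemisimple_of_squarefree_aeval_eq_zero hsep.squarefree ?_
  rw [← LinearMap.ker_eq_top, eq_top_iff, ← hf]
  refine iSup_le fun μ => fun v hv => ?_
  rcases eq_or_ne v 0 with rfl | hv0
  · exact (LinearMap.ker (aeval f P)).zero_mem
  have hev : f.HasEigenvalue μ := Module.End.hasEigenvalue_of_hasEigenvector ⟨hv, hv0⟩
  have hμ : μ ∈ Λ := by
    rw [hΛ, Multiset.mem_toFinset, Polynomial.mem_roots (minpoly.ne_zero hint)]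
    exact Module.End.isRoot_of_hasEigenvalue hev
  rw [LinearMap.mem_ker]
  rw [hP, ← Finset.mul_prod_erase Λ _ hμ, mul_comm, map_mul, Module.End.mul_apply]
  have : (aeval f) (X - C μ) v = 0 := by
    simp [Module.End.mem_eigenspace_iff.mp hv, Module.algebraMap_end_apply]
  rw [this, map_zero]

lemma IsDiag.maxGenEigenspace_eq {f : Module.End K M} (hf : IsDiag f) (μ : K) :
    f.maxGenEigenspace μ = f.eigenspace μ :=
  hf.isSemisimple.isFinitelySemisimple.maxGenEigenspace_eq_eigenspace μ

lemma IsDiag.iSup_maxGenEigenspace {f : Module.End K M} (hf : IsDiag f) :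
    ⨆ μ, f.maxGenEigenspace μ = ⊤ := by
  simpa only [hf.maxGenEigenspace_eq] using show ⨆ μ, f.eigenspace μ = ⊤ from hf

lemma IsDiag.aeval_mul_eq_right {f g : Module.End K M} (hfg : Commute f g)
    (hf : IsDiag f) (hg : IsDiag g) (P : K[X])
    (hP : ∀ α β : K, f.HasEigenvalue α → g.HasEigenvalue β → P.eval (α * β) = β) :
    aeval (f * g) P = g := by
  classical
  set F : Fin 2 → Module.End K M := ![f, g] with hF
  have hcomm : Pairwise fun i j => Commute (F i) (F j) := by
    intro i j hij
    fin_cases i <;> fin_cases j <;> simp_all [hF]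
    · exact hfg.symm
  have htop : ⨆ χ : Fin 2 → K, ⨅ i, (F i).maxGenEigenspace (χ i) = ⊤ :=
    Module.End.iSup_iInf_maxGenEigenspace_eq_top_of_iSup_maxGenEigenspace_eq_top_of_commute
      F hcomm (by
        intro i
        fin_cases i
        · simpa [hF] using hf.iSup_maxGenEigenspace
        · simpa [hF] using hg.iSup_maxGenEigenspace)
  rw [← sub_eq_zero, ← LinearMap.ker_eq_top, eq_top_iff, ← htop]
  refine iSup_le fun χ => fun v hv => ?_
  rcases eq_or_ne v 0 with rfl | hv0
  · exact Submodule.zero_mem _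
  have hv0' : v ∈ (F 0).maxGenEigenspace (χ 0) := (Submodule.mem_iInf _).mp hv 0
  have hv1' : v ∈ (F 1).maxGenEigenspace (χ 1) := (Submodule.mem_iInf _).mp hv 1
  rw [show F 0 = f by simp [hF], hf.maxGenEigenspace_eq] at hv0'
  rw [show F 1 = g by simp [hF], hg.maxGenEigenspace_eq] at hv1'
  have hα : f.HasEigenvalue (χ 0) := Module.End.hasEigenvalue_of_hasEigenvector ⟨hv0', hv0⟩
  have hβ : g.HasEigenvalue (χ 1) := Module.End.hasEigenvalue_of_hasEigenvector ⟨hv1', hv0⟩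
  have hfv : f v = χ 0 • v := Module.End.mem_eigenspace_iff.mp hv0'
  have hgv : g v = χ 1 • v := Module.End.mem_eigenspace_iff.mp hv1'
  have hmem : v ∈ (f * g).eigenspace (χ 0 * χ 1) := by
    rw [Module.End.mem_eigenspace_iff, Module.End.mul_apply, hgv, map_smul, hfv,
      smul_smul, mul_comm]
  have : aeval (f * g) P v = P.eval (χ 0 * χ 1) • v :=
    Module.End.aeval_apply_of_hasEigenvector ⟨hmem, hv0⟩
  rw [LinearMap.mem_ker, LinearMap.sub_apply, this, hP _ _ hα hβ, hgv, sub_self]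

end Diag

lemma exists_real_interpolation (S : Finset ℂ)
    (hS : ∀ z ∈ S, (starRingEnd ℂ) z ∈ S) (t : ℂ → ℂ)
    (ht : ∀ z, t ((starRingEnd ℂ) z) = (starRingEnd ℂ) (t z)) :
    ∃ q : ℝ[X], ∀ z ∈ S, (q.map (algebraMap ℝ ℂ)).eval z = t z := by
  classical
  set P : ℂ[X] := Lagrange.interpolate S id t with hPdef
  have hPeval : ∀ z ∈ S, P.eval z = t z := fun z hz =>
    Lagrange.eval_interpolate_at_node t (Set.injOn_id _) hz
  obtain ⟨A, B, hAB⟩ := exists_re_im P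
  refine ⟨A, fun z hz => ?_⟩
  set a := (A.map (algebraMap ℝ ℂ)).eval z with ha
  set b := (B.map (algebraMap ℝ ℂ)).eval z with hb
  have h1 : a + Complex.I * b = t z := by
    have := hPeval z hz
    rw [hAB] at this
    simpa [ha, hb] using this
  have h2 : (starRingEnd ℂ) a + Complex.I * (starRingEnd ℂ) b = t ((starRingEnd ℂ) z) := by
    have := hPeval _ (hS z hz)
    rw [hAB] at this
    simp only [Polynomial.eval_add, Polynomial.eval_mul, Polynomial.eval_C] at this
    rw [eval_map_conj, eval_map_conj, ← ha, ← hb] at this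
    exact this
  rw [ht z, ← h1, map_add, map_mul, Complex.conj_I] at h2
  have hb0 : b = 0 := by
    have h3 : (2 * Complex.I) * (starRingEnd ℂ) b = 0 := by linear_combination h2
    rcases mul_eq_zero.mp h3 with h4 | h4
    · exact absurd h4 (by simp [Complex.ext_iff])
    · simpa using congrArg (starRingEnd ℂ) h4
  rw [hb0, mul_zero, add_zero] at h1
  exact h1

section Inv

variable {V : Type*} [AddCommGroup V] [Module ℝ V] [FiniteDimensional ℝ V]

lemma exists_inv_mem {x : Module.End ℝ V} (hx : IsUnit x) :
    ∃ y ∈ Algebra.adjoin ℝ {x}, x * y = 1 ∧ y * x = 1 := by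
  have hint : IsIntegral ℝ x := Algebra.IsIntegral.isIntegral x
  set m := minpoly ℝ x with hm
  have hc : m.coeff 0 ≠ 0 := by
    intro hc0
    obtain ⟨q, hq⟩ := Polynomial.X_dvd_iff.mpr hc0
    have hq0 : q ≠ 0 := by
      rintro rfl
      exact minpoly.ne_zero hint (by simpa using hq)
    have haq : aeval x q = 0 := by
      have h0 := minpoly.aeval ℝ x
      rw [← hm, hq, map_mul, aeval_X] at h0
      exact hx.mul_left_cancel (by simpa using h0)
    have hdeg := minpoly.degree_le_of_ne_zero ℝ x hq0 haq
    have : q.degree < m.degree := by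
      rw [hq, mul_comm]
      exact Polynomial.degree_lt_degree_mul_X hq0
    exact absurd hdeg this.not_ge
  set y : Module.End ℝ V := (-(m.coeff 0)⁻¹) • aeval x m.divX with hy
  have hxc : Commute x (aeval x m.divX) := by
    refine Algebra.commute_of_mem_adjoin_singleton_of_commute (R := ℝ) (b := x) ?_ rfl
    rw [Algebra.adjoin_singleton_eq_range_aeval]
    exact ⟨m.divX, rfl⟩
  have key : aeval x m.divX * x = -(m.coeff 0) • 1 := by
    have h0 := minpoly.aeval ℝ x
    rw [← hm, ← Polynomial.divX_mul_X_add m] at h0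
    rw [map_add, map_mul, aeval_X, aeval_C, Algebra.algebraMap_eq_smul_one] at h0
    rw [eq_comm, neg_smul, neg_eq_iff_add_eq_zero, add_comm]
    exact h0
  have hyx : y * x = 1 := by
    rw [hy, smul_mul_assoc, key, smul_smul]
    rw [neg_mul_neg, inv_mul_cancel₀ hc, one_smul]
  have hxy : x * y = 1 := by
    have : x * y = y * x := by
      rw [hy, mul_smul_comm, smul_mul_assoc, hxc.eq]
    rw [this, hyx]
  refine ⟨y, ?_, hxy, hyx⟩
  rw [hy]
  refine Subalgebra.smul_mem _ ?_ _
  rw [Algebra.adjoin_singleton_eq_range_aeval]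
  exact ⟨m.divX, rfl⟩

end Inv

open scoped Pointwise

theorem multiplicative_jordan_components_are_polynomials
    {V : Type*} [AddCommGroup V] [Module ℝ V] [FiniteDimensional ℝ V]
    (g e h u : Module.End ℝ V) (hg : IsUnit g)
    (heh : Commute e h) (heu : Commute e u) (hhu : Commute h u)
    (he : IsMultElliptic e) (hh : IsMultHyperbolic h) (hu : IsNilpotent (u - 1))
    (hgd : g = e * h * u) :
    ∃ p q r : Polynomial ℝ,
      e = Polynomial.aeval g p ∧ h = Polynomial.aeval g q ∧ u = Polynomial.aeval g r := by
  classical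
  set s : Module.End ℝ V := e * h with hs_def
  -- commutation facts
  have cse : Commute s e := Commute.mul_left (Commute.refl e) heh.symm
  have csh : Commute s h := Commute.mul_left heh (Commute.refl h)
  have csu : Commute s u := Commute.mul_left heu hhu
  have csg : Commute s g := by rw [hgd]; exact (cse.mul_right csh).mul_right csu
  have hde : IsDiag (cplx e) := he.1
  have hdh : IsDiag (cplx h) := hh.1
  have hCommC : Commute (cplx e) (cplx h) := by
    unfold Commute SemiconjBy
    rw [← cplx_mul, ← cplx_mul, heh.eq]
  -- semisimplicity of s over ℝ
  have hssC : (cplx s).IsSemisimple := by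
    rw [hs_def, cplx_mul]
    exact Module.End.IsSemisimple.mul_of_commute hCommC hde.isSemisimple hdh.isSemisimple
  have hsq : Squarefree (minpoly ℝ s) := by
    have h1 := hssC.minpoly_squarefree
    rw [minpoly_cplx] at h1
    have hsep : ((minpoly ℝ s).map (algebraMap ℝ ℂ)).Separable :=
      PerfectField.separable_iff_squarefree.mpr h1
    exact ((Polynomial.separable_map _).mp hsep).squarefree
  have hss : s.IsSemisimple :=
    Module.End.isSemisimple_of_squarefree_aeval_eq_zero hsq (minpoly.aeval ℝ s)
  -- nilpotent part
  have hgd' : g = s * u := by rw [hgd]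
  set n : Module.End ℝ V := g - s with hn_def
  have hnnil : IsNilpotent n := by
    have hns : n = s * (u - 1) := by rw [hn_def, hgd', mul_sub, mul_one]
    rw [hns]
    exact (csu.sub_right (Commute.one_right s)).isNilpotent_mul_left hu
  -- Jordan-Chevalley
  obtain ⟨n₀, hn₀mem, s₀, hs₀mem, hn₀, hs₀, hgsum⟩ :=
    Module.End.exists_isNilpotent_isSemisimple (f := g) (K := ℝ)
  have hcs₀ : Commute s s₀ := Algebra.commute_of_mem_adjoin_singleton_of_commute hs₀mem csg
  have hcgn : Commute n g := (Commute.refl g).sub_left csg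
  have hcn₀ : Commute n₀ n :=
    (Algebra.commute_of_mem_adjoin_singleton_of_commute hn₀mem hcgn).symm
  have hdiff : s - s₀ = n₀ - n := by rw [hn_def, hgsum]; abel
  have hzero : s - s₀ = 0 := by
    apply Module.End.eq_zero_of_isNilpotent_isSemisimple
    · rw [hdiff]; exact hcn₀.isNilpotent_sub hn₀ hnnil
    · exact Module.End.IsSemisimple.sub_of_commute hcs₀ hss hs₀
  have hsmem : s ∈ Algebra.adjoin ℝ {g} := (sub_eq_zero.mp hzero) ▸ hs₀mem
  have hadj : Algebra.adjoin ℝ {s} ≤ Algebra.adjoin ℝ {g} :=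
    Algebra.adjoin_le (Set.singleton_subset_iff.mpr hsmem)
  -- units
  have huu : IsUnit u := by
    have h1 : u = 1 + (u - 1) := by abel
    rw [h1]; exact IsNilpotent.isUnit_one_add hu
  have hsu : IsUnit s := by
    have h1 : s = g * ↑huu.unit⁻¹ := by
      rw [hgd', mul_assoc, huu.mul_val_inv, mul_one]
    have h2 := hg.mul huu.unit⁻¹.isUnit
    rwa [← h1] at h2
  obtain ⟨y, hymem, hxy, hyx⟩ := exists_inv_mem hsu
  have humem : u ∈ Algebra.adjoin ℝ {g} := by
    have h1 : u = y * g := by rw [hgd', ← mul_assoc, hyx, one_mul]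
    rw [h1]
    exact mul_mem (hadj hymem) (Algebra.self_mem_adjoin_singleton ℝ g)
  -- eigenvalue sets
  set Λe : Finset ℂ := (minpoly ℂ (cplx e)).roots.toFinset with hΛe
  set Λh : Finset ℂ := (minpoly ℂ (cplx h)).roots.toFinset with hΛh
  have hmemΛe : ∀ α, (cplx e).HasEigenvalue α → α ∈ Λe := fun α hα => by
    rw [hΛe, Multiset.mem_toFinset,
      Polynomial.mem_roots (minpoly.ne_zero (Algebra.IsIntegral.isIntegral _))]
    exact Module.End.isRoot_of_hasEigenvalue hα
  have hmemΛh : ∀ β, (cplx h).HasEigenvalue β → β ∈ Λh := fun β hβ => by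
    rw [hΛh, Multiset.mem_toFinset,
      Polynomial.mem_roots (minpoly.ne_zero (Algebra.IsIntegral.isIntegral _))]
    exact Module.End.isRoot_of_hasEigenvalue hβ
  have hconj : ∀ (X : Module.End ℝ V) (z : ℂ),
      z ∈ (minpoly ℂ (cplx X)).roots.toFinset →
      (starRingEnd ℂ) z ∈ (minpoly ℂ (cplx X)).roots.toFinset := by
    intro X z hz
    have hne : minpoly ℂ (cplx X) ≠ 0 :=
      minpoly.ne_zero (Algebra.IsIntegral.isIntegral _)
    rw [Multiset.mem_toFinset, Polynomial.mem_roots hne] at hz ⊢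
    rw [minpoly_cplx] at hz ⊢
    have hz' : ((minpoly ℝ X).map (algebraMap ℝ ℂ)).eval z = 0 := hz
    show ((minpoly ℝ X).map (algebraMap ℝ ℂ)).eval ((starRingEnd ℂ) z) = 0
    rw [eval_map_conj, hz', map_zero]
  set S : Finset ℂ := Λe * Λh with hS_def
  have hSconj : ∀ z ∈ S, (starRingEnd ℂ) z ∈ S := by
    intro z hz
    rw [hS_def, Finset.mem_mul] at hz
    obtain ⟨α, hα, β, hβ, rfl⟩ := hz
    rw [map_mul]
    exact Finset.mul_mem_mul (hconj e α hα) (hconj h β hβ)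
  -- the value of β as |αβ|
  have habs : ∀ α β : ℂ, (cplx e).HasEigenvalue α → (cplx h).HasEigenvalue β →
      ((‖α * β‖ : ℝ) : ℂ) = β := by
    intro α β hα hβ
    obtain ⟨him, hre⟩ := hh.2 β hβ
    have hβ_eq : β = ((β.re : ℝ) : ℂ) := Complex.ext rfl (by simp [him])
    rw [norm_mul, he.2 α hα, one_mul]
    rw [hβ_eq, Complex.norm_real, Real.norm_eq_abs, abs_of_pos hre]
  -- h is a polynomial in s
  obtain ⟨q, hq⟩ := exists_real_interpolation S hSconj (fun z => ((‖z‖ : ℝ) : ℂ))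
    (by intro z; simp)
  have hq_h : aeval (cplx e * cplx h) (q.map (algebraMap ℝ ℂ)) = cplx h := by
    refine IsDiag.aeval_mul_eq_right hCommC hde hdh _ ?_
    intro α β hα hβ
    rw [hq _ (Finset.mul_mem_mul (hmemΛe α hα) (hmemΛh β hβ))]
    exact habs α β hα hβ
  have hh_eq : h = aeval s q := by
    apply cplx_injective
    rw [← cplx_aeval, hs_def, cplx_mul, hq_h]
  have hhmem : h ∈ Algebra.adjoin ℝ {g} := by
    apply hadj
    rw [hh_eq, Algebra.adjoin_singleton_eq_range_aeval]
    exact ⟨q, rfl⟩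
  -- e is a polynomial in s
  obtain ⟨p, hp⟩ := exists_real_interpolation S hSconj
    (fun z => z / ((‖z‖ : ℝ) : ℂ))
    (by intro z; rw [map_div₀]; simp)
  have hp_e : aeval (cplx h * cplx e) (p.map (algebraMap ℝ ℂ)) = cplx e := by
    refine IsDiag.aeval_mul_eq_right hCommC.symm hdh hde _ ?_
    intro β α hβ hα
    have hmemS : α * β ∈ S := Finset.mul_mem_mul (hmemΛe α hα) (hmemΛh β hβ)
    rw [mul_comm, hp _ hmemS, habs α β hα hβ]
    have hβ0 : β ≠ 0 := by
      intro h0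
      have := (hh.2 β hβ).2
      rw [h0] at this
      simp at this
    rw [mul_div_assoc, div_self hβ0, mul_one]
  have he_eq : e = aeval s p := by
    apply cplx_injective
    rw [← cplx_aeval, hs_def, show cplx (e * h) = cplx h * cplx e from by
      rw [cplx_mul]; exact hCommC.eq, hp_e]
  have hemem : e ∈ Algebra.adjoin ℝ {g} := by
    apply hadj
    rw [he_eq, Algebra.adjoin_singleton_eq_range_aeval]
    exact ⟨p, rfl⟩
  -- conclude
  rw [Algebra.adjoin_singleton_eq_range_aeval, AlgHom.mem_range] at hemem hhmem humem
  obtain ⟨p₁, hp₁⟩ := hemem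
  obtain ⟨q₁, hq₁⟩ := hhmem
  obtain ⟨r₁, hr₁⟩ := humem
  exact ⟨p₁, q₁, r₁, hp₁.symm, hq₁.symm, hr₁.symm⟩
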